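/- arXiv:1702.01673 — 2 statements merged into one kernel-verified Lean document; each statement's English description precedes it below -/
import Mathlib

section
/- Let η be a Borel probability measure on ℝ² with marginals μ and ν, let x, u ∈ ℝ, and let α > 1/2. Suppose that (y₁·y₂)^α · |G_η(x + i·y₁, u + i·y₂)| → +∞ as (y₁, y₂) → (0, 0) with y₁, y₂ > 0. Then there exists t ∈ (0, 2α − 1] such that both sets {y^t · |Im G_μ(x + i·y)| : y > 0} and {y^t · |Im G_ν(u + i·y)| : y > 0} are unbounded. -/
open MeasureTheory Complex Filter Topology

/-- The (one-variable) Cauchy transform of a measure on `ℝ`,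
`G_μ(z) = ∫ 1/(z - t) dμ(t)`. -/
noncomputable def cauchyTransform (μ : Measure ℝ) (z : ℂ) : ℂ :=
  ∫ t, (z - (t : ℂ))⁻¹ ∂μ

/-- The two-variable Cauchy transform of a measure on `ℝ²`,
`G_η(z, w) = ∫ 1/((z - t)(w - s)) dη(t, s)`. -/
noncomputable def cauchyTransform2 (η : Measure (ℝ × ℝ)) (z w : ℂ) : ℂ :=
  ∫ p, ((z - (p.1 : ℂ)) * (w - (p.2 : ℂ)))⁻¹ ∂η

lemma sub_ofReal_ne_zero {z : ℂ} (hz : 0 < z.im) (t : ℝ) : z - (t:ℂ) ≠ 0 := by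
  intro h
  have : (z - (t:ℂ)).im = 0 := by rw [h]; simp
  simp at this; linarith

lemma cont_inv {z : ℂ} (hz : 0 < z.im) : Continuous fun t : ℝ => (z - (t:ℂ))⁻¹ :=
  (continuous_const.sub Complex.continuous_ofReal).inv₀ (fun t => sub_ofReal_ne_zero hz t)

lemma norm_inv_le {z : ℂ} (hz : 0 < z.im) (t : ℝ) : ‖(z - (t:ℂ))⁻¹‖ ≤ z.im⁻¹ := by
  rw [norm_inv]
  apply inv_anti₀ hz
  calc z.im = |(z - (t:ℂ)).im| := by simp [abs_of_pos hz]
  _ ≤ ‖z - (t:ℂ)‖ := Complex.abs_im_le_norm _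
  _ = ‖z - (t:ℂ)‖ := rfl

lemma integrable_inv {z : ℂ} (hz : 0 < z.im) (μ : Measure ℝ) [IsFiniteMeasure μ] :
    Integrable (fun t : ℝ => (z - (t:ℂ))⁻¹) μ := by
  refine Integrable.mono' (integrable_const z.im⁻¹) ((cont_inv hz).aestronglyMeasurable) ?_
  exact Filter.Eventually.of_forall (norm_inv_le hz)

lemma integrable_sq {z : ℂ} (hz : 0 < z.im) (μ : Measure ℝ) [IsFiniteMeasure μ] :
    Integrable (fun t : ℝ => ‖(z - (t:ℂ))⁻¹‖ ^ 2) μ := by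
  refine Integrable.mono' (integrable_const (z.im⁻¹ ^ 2)) ?_ ?_
  · exact (((cont_inv hz).norm).pow 2).aestronglyMeasurable
  · refine Filter.Eventually.of_forall fun t => ?_
    rw [Real.norm_of_nonneg (by positivity)]
    exact pow_le_pow_left₀ (norm_nonneg _) (norm_inv_le hz t) 2

lemma im_cauchy {z : ℂ} (hz : 0 < z.im) (μ : Measure ℝ) [IsFiniteMeasure μ] :
    |(cauchyTransform μ z).im| = z.im * ∫ t, ‖(z - (t:ℂ))⁻¹‖ ^ 2 ∂μ := by
  have h1 : (cauchyTransform μ z).im = ∫ t, ((z - (t:ℂ))⁻¹).im ∂μ :=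
    (integral_im (integrable_inv hz μ)).symm
  have h2 : ∀ t : ℝ, ((z - (t:ℂ))⁻¹).im = -(z.im * ‖(z - (t:ℂ))⁻¹‖ ^ 2) := by
    intro t
    rw [Complex.inv_im]
    have him : (z - (t:ℂ)).im = z.im := by simp
    have hns : ‖(z - (t:ℂ))⁻¹‖ ^ 2 = (Complex.normSq (z - (t:ℂ)))⁻¹ := by
      rw [← Complex.normSq_inv, ← Complex.sq_norm]
    rw [him, hns]
    ring
  rw [h1]
  simp only [h2]
  rw [integral_neg, integral_const_mul, abs_neg, _root_.abs_of_nonneg]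
  positivity

lemma abs_im_cauchy_le {z : ℂ} (hz : 0 < z.im) (μ : Measure ℝ) [IsProbabilityMeasure μ] :
    |(cauchyTransform μ z).im| ≤ z.im⁻¹ := by
  calc |(cauchyTransform μ z).im| ≤ ‖cauchyTransform μ z‖ :=
        Complex.abs_im_le_norm _
  _ = ‖∫ t, (z - (t:ℂ))⁻¹ ∂μ‖ := rfl
  _ ≤ z.im⁻¹ := by
      have := norm_integral_le_of_norm_le_const (μ := μ) (C := z.im⁻¹)
        (Filter.Eventually.of_forall (norm_inv_le hz))
      simpa using this

lemma key_CS (η : Measure (ℝ × ℝ)) [IsProbabilityMeasure η] {z w : ℂ}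
    (hz : 0 < z.im) (hw : 0 < w.im) :
    (‖cauchyTransform2 η z w‖) ^ 2 ≤
      (∫ p : ℝ × ℝ, ‖(z - (p.1 : ℂ))⁻¹‖ ^ 2 ∂η) * (∫ p : ℝ × ℝ, ‖(w - (p.2 : ℂ))⁻¹‖ ^ 2 ∂η) := by
  have hcf : Continuous fun p : ℝ × ℝ => ‖(z - (p.1 : ℂ))⁻¹‖ :=
    ((cont_inv hz).comp continuous_fst).norm
  have hcg : Continuous fun p : ℝ × ℝ => ‖(w - (p.2 : ℂ))⁻¹‖ :=
    ((cont_inv hw).comp continuous_snd).norm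
  have hf : MemLp (fun p : ℝ × ℝ => ‖(z - (p.1 : ℂ))⁻¹‖) (ENNReal.ofReal 2) η :=
    MemLp.of_bound hcf.aestronglyMeasurable z.im⁻¹
      (Filter.Eventually.of_forall fun p => by
        rw [Real.norm_of_nonneg (norm_nonneg _)]; exact norm_inv_le hz _)
  have hg : MemLp (fun p : ℝ × ℝ => ‖(w - (p.2 : ℂ))⁻¹‖) (ENNReal.ofReal 2) η :=
    MemLp.of_bound hcg.aestronglyMeasurable w.im⁻¹
      (Filter.Eventually.of_forall fun p => by
        rw [Real.norm_of_nonneg (norm_nonneg _)]; exact norm_inv_le hw _)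
  have step1 : ‖cauchyTransform2 η z w‖ ≤
      ∫ p : ℝ × ℝ, ‖(z - (p.1 : ℂ))⁻¹‖ * ‖(w - (p.2 : ℂ))⁻¹‖ ∂η := by
    show ‖∫ p, ((z - (p.1 : ℂ)) * (w - (p.2 : ℂ)))⁻¹ ∂η‖ ≤ _
    refine le_trans (norm_integral_le_integral_norm _) (le_of_eq ?_)
    refine integral_congr_ae (Filter.Eventually.of_forall fun p => ?_)
    simp [mul_inv, norm_mul, mul_comm]
  have step2 := integral_mul_le_Lp_mul_Lq_of_nonneg (μ := η)
      (Real.holderConjugate_iff (p := 2) (q := 2) |>.mpr ⟨by norm_num, by norm_num⟩)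
      (Filter.Eventually.of_forall fun p => norm_nonneg _)
      (Filter.Eventually.of_forall fun p => norm_nonneg _) hf hg
  have hrw : ∀ h : ℝ × ℝ → ℝ, (∫ p, h p ^ (2:ℝ) ∂η) = ∫ p, h p ^ 2 ∂η := by
    intro h
    refine integral_congr_ae (Filter.Eventually.of_forall fun p => ?_)
    norm_num [show ((2:ℝ) = ((2:ℕ):ℝ)) by norm_num, Real.rpow_natCast]
  rw [hrw, hrw] at step2
  set A := ∫ p : ℝ × ℝ, ‖(z - (p.1 : ℂ))⁻¹‖ ^ 2 ∂η with hA
  set B := ∫ p : ℝ × ℝ, ‖(w - (p.2 : ℂ))⁻¹‖ ^ 2 ∂η with hB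
  have hA0 : 0 ≤ A := integral_nonneg fun p => by positivity
  have hB0 : 0 ≤ B := integral_nonneg fun p => by positivity
  have habs : ‖cauchyTransform2 η z w‖ ≤ Real.sqrt A * Real.sqrt B := by
    rw [Real.sqrt_eq_rpow, Real.sqrt_eq_rpow]
    exact step1.trans step2
  calc (‖cauchyTransform2 η z w‖) ^ 2 ≤ (Real.sqrt A * Real.sqrt B) ^ 2 :=
        pow_le_pow_left₀ (norm_nonneg _) habs 2
  _ = A * B := by rw [mul_pow, Real.sq_sqrt hA0, Real.sq_sqrt hB0]

lemma marg_fst (η : Measure (ℝ × ℝ)) [IsProbabilityMeasure η] {z : ℂ} (hz : 0 < z.im) :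
    (∫ p : ℝ × ℝ, ‖(z - (p.1 : ℂ))⁻¹‖ ^ 2 ∂η) =
      ∫ t, ‖(z - (t : ℂ))⁻¹‖ ^ 2 ∂(η.map Prod.fst) := by
  rw [integral_map measurable_fst.aemeasurable
    ((show Continuous fun t : ℝ => ‖(z - (t:ℂ))⁻¹‖ ^ 2 from (cont_inv hz).norm.pow 2).aestronglyMeasurable)]

lemma marg_snd (η : Measure (ℝ × ℝ)) [IsProbabilityMeasure η] {w : ℂ} (hw : 0 < w.im) :
    (∫ p : ℝ × ℝ, ‖(w - (p.2 : ℂ))⁻¹‖ ^ 2 ∂η) =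
      ∫ t, ‖(w - (t : ℂ))⁻¹‖ ^ 2 ∂(η.map Prod.snd) := by
  rw [integral_map measurable_snd.aemeasurable
    ((show Continuous fun t : ℝ => ‖(w - (t:ℂ))⁻¹‖ ^ 2 from (cont_inv hw).norm.pow 2).aestronglyMeasurable)]

lemma main_bound (η : Measure (ℝ × ℝ)) [IsProbabilityMeasure η] (x u α : ℝ)
    {y₁ y₂ : ℝ} (h1 : 0 < y₁) (h2 : 0 < y₂) :
    ((y₁ * y₂) ^ α * ‖cauchyTransform2 η ((x : ℂ) + (y₁ : ℂ) * Complex.I)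
        ((u : ℂ) + (y₂ : ℂ) * Complex.I)‖) ^ 2 ≤
      (y₁ ^ (2 * α - 1) *
          |(cauchyTransform (η.map Prod.fst) ((x : ℂ) + (y₁ : ℂ) * Complex.I)).im|) *
        (y₂ ^ (2 * α - 1) *
          |(cauchyTransform (η.map Prod.snd) ((u : ℂ) + (y₂ : ℂ) * Complex.I)).im|) := by
  set z : ℂ := (x : ℂ) + (y₁ : ℂ) * Complex.I with hzdef
  set w : ℂ := (u : ℂ) + (y₂ : ℂ) * Complex.I with hwdef
  have hz : z.im = y₁ := by simp [hzdef]
  have hw : w.im = y₂ := by simp [hwdef]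
  have hz' : 0 < z.im := by rw [hz]; exact h1
  have hw' : 0 < w.im := by rw [hw]; exact h2
  haveI : IsProbabilityMeasure (η.map Prod.fst) :=
    Measure.isProbabilityMeasure_map measurable_fst.aemeasurable
  haveI : IsProbabilityMeasure (η.map Prod.snd) :=
    Measure.isProbabilityMeasure_map measurable_snd.aemeasurable
  have hfμ := im_cauchy hz' (η.map Prod.fst)
  have hgν := im_cauchy hw' (η.map Prod.snd)
  rw [hz] at hfμ
  rw [hw] at hgν
  have hkey := key_CS η hz' hw'
  rw [marg_fst η hz', marg_snd η hw'] at hkey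
  set A := ∫ t, ‖(z - (t : ℂ))⁻¹‖ ^ 2 ∂(η.map Prod.fst) with hA
  set B := ∫ t, ‖(w - (t : ℂ))⁻¹‖ ^ 2 ∂(η.map Prod.snd) with hB
  have hA0 : 0 ≤ A := integral_nonneg fun p => by positivity
  have hB0 : 0 ≤ B := integral_nonneg fun p => by positivity
  -- rewrite RHS
  have hR1 : y₁ ^ (2 * α - 1) * |(cauchyTransform (η.map Prod.fst) z).im| = y₁ ^ (2 * α) * A := by
    rw [hfμ, ← mul_assoc, ← Real.rpow_add_one (ne_of_gt h1)]
    ring_nf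
  have hR2 : y₂ ^ (2 * α - 1) * |(cauchyTransform (η.map Prod.snd) w).im| = y₂ ^ (2 * α) * B := by
    rw [hgν, ← mul_assoc, ← Real.rpow_add_one (ne_of_gt h2)]
    ring_nf
  rw [hR1, hR2]
  have hL : ((y₁ * y₂) ^ α * ‖cauchyTransform2 η z w‖) ^ 2 =
      (y₁ ^ (2 * α) * y₂ ^ (2 * α)) * (‖cauchyTransform2 η z w‖) ^ 2 := by
    rw [mul_pow, ← Real.rpow_natCast ((y₁ * y₂) ^ α) 2, ← Real.rpow_mul (by positivity),
      Real.mul_rpow (le_of_lt h1) (le_of_lt h2)]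
    norm_num [mul_comm]
  rw [hL]
  calc (y₁ ^ (2 * α) * y₂ ^ (2 * α)) * (‖cauchyTransform2 η z w‖) ^ 2
      ≤ (y₁ ^ (2 * α) * y₂ ^ (2 * α)) * (A * B) := by
        refine mul_le_mul_of_nonneg_left hkey (by positivity)
  _ = (y₁ ^ (2 * α) * A) * (y₂ ^ (2 * α) * B) := by ring

lemma contra_lemma {α : ℝ} (hα : 1 / 2 < α) {P : ℝ × ℝ → ℝ}
    (hlim : Tendsto P (𝓝[Set.Ioi 0 ×ˢ Set.Ioi 0] (0, 0)) atTop)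
    {f g : ℝ → ℝ} (hg0 : ∀ y : ℝ, 0 < y → 0 ≤ g y)
    (hfle : ∀ y : ℝ, 0 < y → f y ≤ y⁻¹)
    (hbound : ∀ y₁ y₂ : ℝ, 0 < y₁ → 0 < y₂ →
      (P (y₁, y₂)) ^ 2 ≤ (y₁ ^ (2 * α - 1) * f y₁) * (y₂ ^ (2 * α - 1) * g y₂))
    {M : ℝ} (hM : ∀ y : ℝ, 0 < y → y ^ (α - 1 / 2) * g y ≤ M) : False := by
  set d : ℝ := α - 1 / 2 with hd
  have hd0 : 0 < d := by rw [hd]; linarith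
  -- choose k
  set k : ℕ := ⌈(2 - 2 * α) / d⌉₊ + 1 with hk
  have hkd : 2 * α - 2 + (k : ℝ) * d ≥ d := by
    have h1 : ((2 - 2 * α) / d) ≤ (⌈(2 - 2 * α) / d⌉₊ : ℝ) := Nat.le_ceil _
    have h2 : (k : ℝ) = (⌈(2 - 2 * α) / d⌉₊ : ℝ) + 1 := by rw [hk]; push_cast; ring
    have h4 : (k : ℝ) * d = (⌈(2 - 2 * α) / d⌉₊ : ℝ) * d + d := by rw [h2]; ring
    have h5 : (2 - 2 * α) ≤ (⌈(2 - 2 * α) / d⌉₊ : ℝ) * d := (div_le_iff₀ hd0).mp h1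
    rw [ge_iff_le, ← sub_nonneg]
    have : 2 * α - 2 + (k:ℝ) * d - d = ((⌈(2 - 2 * α) / d⌉₊ : ℝ) * d) - (2 - 2*α) := by
      rw [h4]; ring
    rw [this]
    linarith
  have hk1 : 1 ≤ k := Nat.le_add_left 1 _
  -- the path
  set φ : ℝ → ℝ × ℝ := fun y => (y, y ^ k) with hφdef
  have hφ : Tendsto φ (𝓝[Set.Ioi 0] 0) (𝓝[Set.Ioi 0 ×ˢ Set.Ioi 0] (0, 0)) := by
    rw [tendsto_nhdsWithin_iff]
    constructor
    · have : Tendsto φ (𝓝 0) (𝓝 ((0 : ℝ), (0 : ℝ) ^ k)) :=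
        (continuous_id.prodMk (continuous_pow k)).tendsto 0
      rw [zero_pow (by omega)] at this
      exact this.mono_left nhdsWithin_le_nhds
    · refine eventually_nhdsWithin_of_forall fun y hy => ?_
      have hy' : 0 < y := hy
      exact ⟨hy', pow_pos hy' k⟩
  have T : Tendsto (P ∘ φ) (𝓝[Set.Ioi 0] 0) atTop := hlim.comp hφ
  have hev : ∀ᶠ y in 𝓝[Set.Ioi 0] (0:ℝ), Real.sqrt M < P (φ y) :=
    T.eventually (eventually_gt_atTop _)
  have hev2 : ∀ᶠ y in 𝓝[Set.Ioi 0] (0:ℝ), y < 1 :=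
    mem_nhdsWithin_of_mem_nhds (Iio_mem_nhds one_pos)
  have hev3 : ∀ᶠ y in 𝓝[Set.Ioi 0] (0:ℝ), y ∈ Set.Ioi (0:ℝ) := self_mem_nhdsWithin
  obtain ⟨y, h1, h2, h3⟩ := (hev.and (hev2.and hev3)).exists
  have hlt1 : y < 1 := h2
  have hy0 : (0:ℝ) < y := h3
  have hyk : (0:ℝ) < y ^ k := pow_pos hy0 k
  -- bound P (φ y) ^ 2 ≤ M
  have hb := hbound y (y ^ k) hy0 hyk
  have e1 : y ^ (2 * α - 1) * f y ≤ y ^ (2 * α - 2) := by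
    calc y ^ (2 * α - 1) * f y ≤ y ^ (2 * α - 1) * y⁻¹ :=
          mul_le_mul_of_nonneg_left (hfle y hy0) (by positivity)
    _ = y ^ (2 * α - 2) := by
        rw [← Real.rpow_neg_one y, ← Real.rpow_add hy0]; congr 1; ring
  have e2 : (y ^ k) ^ (2 * α - 1) * g (y ^ k) ≤ (y ^ k) ^ d * M := by
    have : (y ^ k) ^ (2 * α - 1) = (y ^ k) ^ d * (y ^ k) ^ d := by
      rw [← Real.rpow_add hyk]; congr 1; rw [hd]; ring
    rw [this, mul_assoc]
    exact mul_le_mul_of_nonneg_left (hM _ hyk) (by positivity)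
  have hM0 : 0 ≤ M := by
    have := hM 1 one_pos
    have h0 : (0:ℝ) ≤ g 1 := hg0 1 one_pos
    simpa using le_trans (by simpa using h0) this
  have e3 : (P (φ y)) ^ 2 ≤ M := by
    have hprod : (y ^ (2 * α - 1) * f y) * ((y ^ k) ^ (2 * α - 1) * g (y ^ k)) ≤
        y ^ (2 * α - 2) * ((y ^ k) ^ d * M) := by
      refine mul_le_mul e1 e2 ?_ (by positivity)
      exact mul_nonneg (by positivity) (hg0 _ hyk)
    have heq : y ^ (2 * α - 2) * ((y ^ k) ^ d * M) = y ^ (2 * α - 2 + (k:ℝ) * d) * M := by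
      rw [← Real.rpow_natCast y k, ← Real.rpow_mul (le_of_lt hy0), Real.rpow_add hy0]
      ring
    have hle1 : y ^ (2 * α - 2 + (k:ℝ) * d) ≤ 1 :=
      Real.rpow_le_one (le_of_lt hy0) (le_of_lt hlt1) (le_trans (le_of_lt hd0) hkd)
    calc (P (φ y)) ^ 2 ≤ y ^ (2 * α - 2 + (k:ℝ) * d) * M := by
          rw [← heq]; exact le_trans hb hprod
    _ ≤ 1 * M := mul_le_mul_of_nonneg_right hle1 hM0
    _ = M := one_mul M
  have e4 : M < (P (φ y)) ^ 2 := by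
    have hs : (0:ℝ) ≤ Real.sqrt M := Real.sqrt_nonneg M
    calc M = Real.sqrt M * Real.sqrt M := (Real.mul_self_sqrt hM0).symm
    _ < P (φ y) * P (φ y) := mul_lt_mul'' h1 h1 hs hs
    _ = (P (φ y)) ^ 2 := (sq (P (φ y))).symm
  linarith

lemma swap_tendsto_quad :
    Tendsto Prod.swap (𝓝[Set.Ioi (0:ℝ) ×ˢ Set.Ioi (0:ℝ)] (0, 0))
      (𝓝[Set.Ioi (0:ℝ) ×ˢ Set.Ioi (0:ℝ)] (0, 0)) := by
  rw [tendsto_nhdsWithin_iff]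
  constructor
  · exact (continuous_swap.tendsto ((0:ℝ), (0:ℝ))).mono_left nhdsWithin_le_nhds
  · exact eventually_nhdsWithin_of_forall fun p hp => ⟨hp.2, hp.1⟩

theorem stmt11 (η : Measure (ℝ × ℝ)) [IsProbabilityMeasure η]
    (x u α : ℝ) (hα : 1 / 2 < α)
    (hlim : Tendsto
      (fun p : ℝ × ℝ => (p.1 * p.2) ^ α *
        ‖cauchyTransform2 η ((x : ℂ) + (p.1 : ℂ) * Complex.I)
          ((u : ℂ) + (p.2 : ℂ) * Complex.I)‖)
      (𝓝[Set.Ioi 0 ×ˢ Set.Ioi 0] (0, 0)) atTop) :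
    ∃ t ∈ Set.Ioc (0 : ℝ) (2 * α - 1),
      ¬ BddAbove ((fun y : ℝ =>
          y ^ t * |(cauchyTransform (η.map Prod.fst) ((x : ℂ) + (y : ℂ) * Complex.I)).im|) ''
          Set.Ioi 0) ∧
      ¬ BddAbove ((fun y : ℝ =>
          y ^ t * |(cauchyTransform (η.map Prod.snd) ((u : ℂ) + (y : ℂ) * Complex.I)).im|) ''
          Set.Ioi 0) := by
  haveI : IsProbabilityMeasure (η.map Prod.fst) :=
    Measure.isProbabilityMeasure_map measurable_fst.aemeasurable
  haveI : IsProbabilityMeasure (η.map Prod.snd) :=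
    Measure.isProbabilityMeasure_map measurable_snd.aemeasurable
  set f : ℝ → ℝ :=
    fun y => |(cauchyTransform (η.map Prod.fst) ((x : ℂ) + (y : ℂ) * Complex.I)).im| with hfdef
  set g : ℝ → ℝ :=
    fun y => |(cauchyTransform (η.map Prod.snd) ((u : ℂ) + (y : ℂ) * Complex.I)).im| with hgdef
  have him1 : ∀ y : ℝ, 0 < y → (0:ℝ) < ((x : ℂ) + (y : ℂ) * Complex.I).im := by
    intro y hy; simpa using hy
  have him2 : ∀ y : ℝ, 0 < y → (0:ℝ) < ((u : ℂ) + (y : ℂ) * Complex.I).im := by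
    intro y hy; simpa using hy
  have hfle : ∀ y : ℝ, 0 < y → f y ≤ y⁻¹ := by
    intro y hy
    have := abs_im_cauchy_le (him1 y hy) (η.map Prod.fst)
    simpa using this
  have hgle : ∀ y : ℝ, 0 < y → g y ≤ y⁻¹ := by
    intro y hy
    have := abs_im_cauchy_le (him2 y hy) (η.map Prod.snd)
    simpa using this
  refine ⟨α - 1 / 2, ⟨by linarith, by linarith⟩, ?_, ?_⟩
  · -- first marginal unbounded
    intro hB
    obtain ⟨M, hM⟩ := hB
    have hM' : ∀ y : ℝ, 0 < y → y ^ (α - 1 / 2) * f y ≤ M :=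
      fun y hy => hM (Set.mem_image_of_mem _ hy)
    exact contra_lemma hα (hlim.comp swap_tendsto_quad)
      (fun y hy => abs_nonneg _) hgle
      (fun y₁ y₂ h1 h2 => by
        have := main_bound η x u α h2 h1
        simp only [Function.comp_apply, Prod.swap_prod_mk]
        calc ((y₂ * y₁) ^ α * ‖cauchyTransform2 η ((x : ℂ) + (y₂ : ℂ) * Complex.I)
            ((u : ℂ) + (y₁ : ℂ) * Complex.I)‖) ^ 2
            ≤ (y₂ ^ (2 * α - 1) * f y₂) * (y₁ ^ (2 * α - 1) * g y₁) := this
        _ = (y₁ ^ (2 * α - 1) * g y₁) * (y₂ ^ (2 * α - 1) * f y₂) := by ring)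
      hM'
  · -- second marginal unbounded
    intro hB
    obtain ⟨M, hM⟩ := hB
    have hM' : ∀ y : ℝ, 0 < y → y ^ (α - 1 / 2) * g y ≤ M :=
      fun y hy => hM (Set.mem_image_of_mem _ hy)
    exact contra_lemma hα hlim (fun y hy => abs_nonneg _) hfle
      (fun y₁ y₂ h1 h2 => main_bound η x u α h1 h2) hM'
end

section
/- Let t > 1, and let η, η_t be Borel probability measures on ℝ², with marginals μ, ν of η and μ_t, ν_t of η_t. Let ξ, ζ ∈ ℝ with η_t({(ξ,ζ)}) > 0 and μ({ξ/t}) > 0, ν({ζ/t}) > 0. Let ω₁, ω₂ : ℂ⁺ → ℂ⁺ be functions such that: (i) μ_t({ξ}) = t·μ({ξ/t}) + 1 − t > 0 and ν_t({ζ}) = t·ν({ζ/t}) + 1 − t > 0; (ii) lim_{y↓0} (ω₁(ξ + iy) − ξ/t)/(iy) = μ({ξ/t})/(t·μ({ξ/t}) + 1 − t) and lim_{y↓0} (ω₂(ζ + iy) − ζ/t)/(iy) = ν({ζ/t})/(t·ν({ζ/t}) + 1 − t) (limits in ℂ); (iii) for all sufficiently small y > 0, G_{η_t}(ξ+iy,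 ζ+iy) ≠ 0, G_η(ω₁(ξ+iy), ω₂(ζ+iy)) ≠ 0, and 1/G_{η_t}(ξ+iy, ζ+iy) = t/G_η(ω₁(ξ+iy), ω₂(ζ+iy)) + (1 − t)/(G_μ(ω₁(ξ+iy))·G_ν(ω₂(ζ+iy))), where moreover G_μ(ω₁(ξ+iy)) = G_{μ_t}(ξ+iy) and G_ν(ω₂(ζ+iy)) = G_{ν_t}(ζ+iy); (iv) for all z, w ∈ ℂ⁺: (Im ω₁(z))·(Im ω₂(w))·|G_η(ω₁(z), ω₂(w))|² ≥ (Im z)·(Im w)·|G_{η_t}(z,w)|². Then η({(ξ/t, ζ/t)}) > 0 and μ_t({ξ})·ν_t({ζ})/η_t({(ξ,ζ)}) = t·μ({ξ/t})·ν({ζ/t})/η({(ξ/t, ζ/t)}) + 1 − t. -/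
set_option maxHeartbeats 1000000


open MeasureTheory Complex Filter Topology

lemma im_le_abs_sub (z : ℂ) (u : ℝ) : z.im ≤ ‖z - u‖ := by
  have h : (z - (u:ℂ)).im = z.im := by simp
  calc z.im ≤ |(z - (u:ℂ)).im| := by rw [h]; exact le_abs_self _
  _ ≤ ‖z - u‖ := Complex.abs_im_le_norm _

lemma sub_real_ne_zero {z : ℂ} (hz : 0 < z.im) (u : ℝ) : z - (u:ℂ) ≠ 0 := by
  intro h0
  have : (z - (u:ℂ)).im = 0 := by rw [h0]; simp
  simp at this; linarith

lemma quot_abs_le {z : ℂ} (hz : 0 < z.im) {c : ℝ} (hb : ‖z - c‖ ≤ 2 * z.im)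
    (u : ℝ) : ‖z - (c:ℂ)‖ / ‖z - (u:ℂ)‖ ≤ 2 := by
  have h1 : z.im ≤ ‖z - u‖ := im_le_abs_sub z u
  have h2 : 0 < ‖z - (u:ℂ)‖ := lt_of_lt_of_le hz h1
  rw [div_le_iff₀ h2]
  calc ‖z - (c:ℂ)‖ ≤ 2 * z.im := hb
  _ ≤ 2 * ‖z - u‖ := by linarith

lemma factor_tendsto {l : Filter ℝ} (c : ℝ) (z : ℝ → ℂ)
    (hz : Tendsto z l (𝓝 (c:ℂ))) (him : ∀ᶠ y in l, 0 < (z y).im) (u : ℝ) :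
    Tendsto (fun y => (z y - (c:ℂ)) / (z y - (u:ℂ))) l
      (𝓝 (if u = c then 1 else 0)) := by
  by_cases h : u = c
  · subst h
    simp only [if_pos rfl]
    refine Tendsto.congr' ?_ tendsto_const_nhds
    filter_upwards [him] with y hy
    exact (div_self (sub_real_ne_zero hy u)).symm
  · simp only [if_neg h]
    have h1 : Tendsto (fun y => z y - (c:ℂ)) l (𝓝 0) := by
      simpa using hz.sub_const (c:ℂ)
    have h2 : Tendsto (fun y => z y - (u:ℂ)) l (𝓝 ((c:ℂ) - u)) := hz.sub_const _
    have hne : (c:ℂ) - u ≠ 0 := by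
      simp only [sub_ne_zero]
      exact_mod_cast fun hh => h (by exact_mod_cast hh.symm)
    have h3 := h1.div h2 hne
    simp only [zero_div] at h3
    exact h3

lemma master2 (η : Measure (ℝ × ℝ)) [IsFiniteMeasure η] (c d : ℝ) (z w : ℝ → ℂ)
    (hz : Tendsto z (𝓝[>] (0:ℝ)) (𝓝 (c:ℂ))) (hw : Tendsto w (𝓝[>] (0:ℝ)) (𝓝 (d:ℂ)))
    (hz2 : ∀ᶠ y in 𝓝[>] (0:ℝ), 0 < (z y).im ∧ ‖z y - c‖ ≤ 2 * (z y).im)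
    (hw2 : ∀ᶠ y in 𝓝[>] (0:ℝ), 0 < (w y).im ∧ ‖w y - d‖ ≤ 2 * (w y).im) :
    Tendsto (fun y => (z y - (c:ℂ)) * (w y - (d:ℂ)) * cauchyTransform2 η (z y) (w y))
      (𝓝[>] (0:ℝ)) (𝓝 (((η ({((c:ℝ),(d:ℝ))} : Set (ℝ × ℝ))).toReal : ℂ))) := by
  set F : ℝ → (ℝ × ℝ) → ℂ := fun y p =>
    ((z y - (c:ℂ)) / (z y - (p.1:ℂ))) * ((w y - (d:ℂ)) / (w y - (p.2:ℂ))) with hF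
  have hFeq : ∀ y p, F y p =
      (z y - (c:ℂ)) * (w y - (d:ℂ)) * ((z y - (p.1:ℂ)) * (w y - (p.2:ℂ)))⁻¹ := by
    intro y p
    simp only [hF, div_eq_mul_inv, mul_inv]
    ring
  have hint : ∀ y, ∫ p, F y p ∂η =
      (z y - (c:ℂ)) * (w y - (d:ℂ)) * cauchyTransform2 η (z y) (w y) := by
    intro y
    simp only [hFeq]
    rw [cauchyTransform2, integral_const_mul]
  set f : (ℝ × ℝ) → ℂ := Set.indicator ({((c:ℝ),(d:ℝ))} : Set (ℝ × ℝ)) (fun _ => (1:ℂ)) with hf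
  have hfint : ∫ p, f p ∂η = ((η ({((c:ℝ),(d:ℝ))} : Set (ℝ × ℝ))).toReal : ℂ) := by
    rw [hf, integral_indicator_const (1:ℂ) (measurableSet_singleton _)]
    simp [Measure.real]
  have key : Tendsto (fun y => ∫ p, F y p ∂η) (𝓝[>] (0:ℝ)) (𝓝 (∫ p, f p ∂η)) := by
    apply tendsto_integral_filter_of_dominated_convergence (fun _ => (4:ℝ))
    · filter_upwards [hz2, hw2] with y hy hy'
      apply Continuous.aestronglyMeasurable
      apply Continuous.mul
      · exact continuous_const.div
          (by continuity) (fun p => sub_real_ne_zero hy.1 p.1)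
      · exact continuous_const.div
          (by continuity) (fun p => sub_real_ne_zero hy'.1 p.2)
    · filter_upwards [hz2, hw2] with y hy hy'
      refine ae_of_all _ fun p => ?_
      have h2 : (0:ℝ) ≤ ‖w y - (d:ℂ)‖ / ‖w y - (p.2:ℂ)‖ :=
        div_nonneg (norm_nonneg _) (norm_nonneg _)
      calc ‖F y p‖ = (‖z y - (c:ℂ)‖ / ‖z y - (p.1:ℂ)‖) *
          (‖w y - (d:ℂ)‖ / ‖w y - (p.2:ℂ)‖) := by
            simp [hF, norm_mul, norm_div]
      _ ≤ 2 * 2 := by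
            apply mul_le_mul (quot_abs_le hy.1 hy.2 p.1) (quot_abs_le hy'.1 hy'.2 p.2) h2
              (by norm_num)
      _ = 4 := by norm_num
    · exact integrable_const _
    · refine ae_of_all _ fun p => ?_
      have h1 := factor_tendsto c z hz (hz2.mono fun y h => h.1) p.1
      have h2 := factor_tendsto d w hw (hw2.mono fun y h => h.1) p.2
      have := h1.mul h2
      have heq : f p = (if p.1 = c then (1:ℂ) else 0) * (if p.2 = d then 1 else 0) := by
        by_cases e1 : p.1 = c <;> by_cases e2 : p.2 = d <;>
          simp [hf, Set.indicator, Set.mem_singleton_iff, Prod.ext_iff, e1, e2, Pi.single_apply]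
      rw [heq]
      exact this
  rw [hfint] at key
  exact key.congr (fun y => hint y)

lemma master1 (μ : Measure ℝ) [IsFiniteMeasure μ] (c : ℝ) (z : ℝ → ℂ)
    (hz : Tendsto z (𝓝[>] (0:ℝ)) (𝓝 (c:ℂ)))
    (hz2 : ∀ᶠ y in 𝓝[>] (0:ℝ), 0 < (z y).im ∧ ‖z y - c‖ ≤ 2 * (z y).im) :
    Tendsto (fun y => (z y - (c:ℂ)) * cauchyTransform μ (z y))
      (𝓝[>] (0:ℝ)) (𝓝 (((μ ({c} : Set ℝ)).toReal : ℂ))) := by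
  set F : ℝ → ℝ → ℂ := fun y u => (z y - (c:ℂ)) / (z y - (u:ℂ)) with hF
  have hint : ∀ y, ∫ u, F y u ∂μ = (z y - (c:ℂ)) * cauchyTransform μ (z y) := by
    intro y
    simp only [hF, div_eq_mul_inv]
    rw [cauchyTransform, integral_const_mul]
  set f : ℝ → ℂ := Set.indicator ({c} : Set ℝ) (fun _ => (1:ℂ)) with hf
  have hfint : ∫ u, f u ∂μ = ((μ ({c} : Set ℝ)).toReal : ℂ) := by
    rw [hf, integral_indicator_const (1:ℂ) (measurableSet_singleton _)]
    simp [Measure.real]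
  have key : Tendsto (fun y => ∫ u, F y u ∂μ) (𝓝[>] (0:ℝ)) (𝓝 (∫ u, f u ∂μ)) := by
    apply tendsto_integral_filter_of_dominated_convergence (fun _ => (2:ℝ))
    · filter_upwards [hz2] with y hy
      exact (continuous_const.div (by continuity)
        (fun u => sub_real_ne_zero hy.1 u)).aestronglyMeasurable
    · filter_upwards [hz2] with y hy
      refine ae_of_all _ fun u => ?_
      have : ‖F y u‖ = ‖z y - (c:ℂ)‖ / ‖z y - (u:ℂ)‖ := by
        simp [hF, norm_div]
      rw [this]
      exact quot_abs_le hy.1 hy.2 u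
    · exact integrable_const _
    · refine ae_of_all _ fun u => ?_
      have h1 := factor_tendsto c z hz (hz2.mono fun y h => h.1) u
      have heq : f u = if u = c then (1:ℂ) else 0 := by
        by_cases e : u = c <;> simp [hf, Set.indicator, e]
      rw [heq]
      exact h1
  rw [hfint] at key
  exact key.congr (fun y => hint y)

lemma alg_identity (iy s₁ s₂ g h u v T : ℂ) (hiy : iy ≠ 0) (hs₁ : s₁ ≠ 0) (hs₂ : s₂ ≠ 0)
    (hg : g ≠ 0) (hh : h ≠ 0)
    (hid : g⁻¹ = T / h + (1 - T) / (u * v)) :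
    (iy * iy * g)⁻¹ = T * (s₁ / iy) * (s₂ / iy) / (s₁ * s₂ * h) +
      (1 - T) / ((iy * u) * (iy * v)) := by
  have e1 : T * (s₁ / iy) * (s₂ / iy) / (s₁ * s₂ * h) = T / (iy * iy * h) := by
    field_simp
  rw [e1, show (iy * u) * (iy * v) = iy * iy * (u * v) by ring, mul_inv, hid]
  simp only [div_eq_mul_inv, mul_inv]
  ring

theorem stmt14
    (t : ℝ) (ht : 1 < t)
    (η ηt : Measure (ℝ × ℝ)) [IsProbabilityMeasure η] [IsProbabilityMeasure ηt]
    (ξ ζ : ℝ)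
    (hatom : 0 < ηt ({(ξ, ζ)} : Set (ℝ × ℝ)))
    (hμ : 0 < (η.map Prod.fst) {ξ / t}) (hν : 0 < (η.map Prod.snd) {ζ / t})
    (ω₁ ω₂ : ℂ → ℂ)
    (hω₁ : ∀ z : ℂ, 0 < z.im → 0 < (ω₁ z).im)
    (hω₂ : ∀ w : ℂ, 0 < w.im → 0 < (ω₂ w).im)
    -- (i) the atoms of the marginals of the semigroup
    (hatomμ : ((ηt.map Prod.fst) {ξ}).toReal = t * ((η.map Prod.fst) {ξ / t}).toReal + 1 - t ∧
      0 < ((ηt.map Prod.fst) {ξ}).toReal)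
    (hatomν : ((ηt.map Prod.snd) {ζ}).toReal = t * ((η.map Prod.snd) {ζ / t}).toReal + 1 - t ∧
      0 < ((ηt.map Prod.snd) {ζ}).toReal)
    -- (ii) Julia–Carathéodory behavior of the subordination functions at the atoms
    (hJC₁ : Tendsto (fun y : ℝ => (ω₁ ((ξ : ℂ) + (y : ℂ) * Complex.I) - ((ξ / t : ℝ) : ℂ)) /
        ((y : ℂ) * Complex.I)) (𝓝[>] (0 : ℝ))
      (𝓝 ((((η.map Prod.fst) {ξ / t}).toReal /
        (t * ((η.map Prod.fst) {ξ / t}).toReal + 1 - t) : ℝ) : ℂ)))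
    (hJC₂ : Tendsto (fun y : ℝ => (ω₂ ((ζ : ℂ) + (y : ℂ) * Complex.I) - ((ζ / t : ℝ) : ℂ)) /
        ((y : ℂ) * Complex.I)) (𝓝[>] (0 : ℝ))
      (𝓝 ((((η.map Prod.snd) {ζ / t}).toReal /
        (t * ((η.map Prod.snd) {ζ / t}).toReal + 1 - t) : ℝ) : ℂ)))
    -- (iii) the subordination identity for the semigroup, for small y > 0
    (hsub : ∀ᶠ (y : ℝ) in 𝓝[>] (0 : ℝ),
      cauchyTransform2 ηt ((ξ : ℂ) + (y : ℂ) * Complex.I) ((ζ : ℂ) + (y : ℂ) * Complex.I) ≠ 0 ∧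
      cauchyTransform2 η (ω₁ ((ξ : ℂ) + (y : ℂ) * Complex.I))
        (ω₂ ((ζ : ℂ) + (y : ℂ) * Complex.I)) ≠ 0 ∧
      (cauchyTransform2 ηt ((ξ : ℂ) + (y : ℂ) * Complex.I)
          ((ζ : ℂ) + (y : ℂ) * Complex.I))⁻¹ =
        (t : ℂ) / cauchyTransform2 η (ω₁ ((ξ : ℂ) + (y : ℂ) * Complex.I))
            (ω₂ ((ζ : ℂ) + (y : ℂ) * Complex.I)) +
          (1 - (t : ℂ)) / (cauchyTransform (η.map Prod.fst) (ω₁ ((ξ : ℂ) + (y : ℂ) * Complex.I)) *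
            cauchyTransform (η.map Prod.snd) (ω₂ ((ζ : ℂ) + (y : ℂ) * Complex.I))) ∧
      cauchyTransform (η.map Prod.fst) (ω₁ ((ξ : ℂ) + (y : ℂ) * Complex.I)) =
        cauchyTransform (ηt.map Prod.fst) ((ξ : ℂ) + (y : ℂ) * Complex.I) ∧
      cauchyTransform (η.map Prod.snd) (ω₂ ((ζ : ℂ) + (y : ℂ) * Complex.I)) =
        cauchyTransform (ηt.map Prod.snd) ((ζ : ℂ) + (y : ℂ) * Complex.I))
    -- (iv) the bound of Proposition 4.1
    (hbound : ∀ z w : ℂ, 0 < z.im → 0 < w.im →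
      z.im * w.im * ‖cauchyTransform2 ηt z w‖ ^ 2 ≤
        (ω₁ z).im * (ω₂ w).im * ‖cauchyTransform2 η (ω₁ z) (ω₂ w)‖ ^ 2) :
    0 < η ({(ξ / t, ζ / t)} : Set (ℝ × ℝ)) ∧
    ((ηt.map Prod.fst) {ξ}).toReal * ((ηt.map Prod.snd) {ζ}).toReal /
        (ηt ({(ξ, ζ)} : Set (ℝ × ℝ))).toReal =
      t * ((η.map Prod.fst) {ξ / t}).toReal * ((η.map Prod.snd) {ζ / t}).toReal /
        (η ({(ξ / t, ζ / t)} : Set (ℝ × ℝ))).toReal + 1 - t := by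
  have hμP : IsProbabilityMeasure (η.map Prod.fst) :=
    Measure.isProbabilityMeasure_map measurable_fst.aemeasurable
  have hνP : IsProbabilityMeasure (η.map Prod.snd) :=
    Measure.isProbabilityMeasure_map measurable_snd.aemeasurable
  have hμtP : IsProbabilityMeasure (ηt.map Prod.fst) :=
    Measure.isProbabilityMeasure_map measurable_fst.aemeasurable
  have hνtP : IsProbabilityMeasure (ηt.map Prod.snd) :=
    Measure.isProbabilityMeasure_map measurable_snd.aemeasurable
  set p : ℝ := ((η.map Prod.fst) {ξ / t}).toReal with hpdef
  set q : ℝ := ((η.map Prod.snd) {ζ / t}).toReal with hqdef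
  set m₁ : ℝ := ((ηt.map Prod.fst) {ξ}).toReal with hm1def
  set m₂ : ℝ := ((ηt.map Prod.snd) {ζ}).toReal with hm2def
  set b : ℝ := (ηt ({(ξ, ζ)} : Set (ℝ × ℝ))).toReal with hbdef
  set a : ℝ := (η ({(ξ / t, ζ / t)} : Set (ℝ × ℝ))).toReal with hadef
  set α : ℝ := p / (t * p + 1 - t) with hαdef
  set β : ℝ := q / (t * q + 1 - t) with hβdef
  have hp : 0 < p := ENNReal.toReal_pos hμ.ne' (measure_ne_top _ _)
  have hq : 0 < q := ENNReal.toReal_pos hν.ne' (measure_ne_top _ _)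
  have hb : 0 < b := ENNReal.toReal_pos hatom.ne' (measure_ne_top _ _)
  have hm1 : 0 < m₁ := hatomμ.2
  have hm2 : 0 < m₂ := hatomν.2
  have hα : 0 < α := by rw [hαdef, ← hatomμ.1]; exact div_pos hp hm1
  have hβ : 0 < β := by rw [hβdef, ← hatomν.1]; exact div_pos hq hm2
  -- basic facts about the vertical line
  have hy0 : ∀ᶠ y in 𝓝[>] (0:ℝ), 0 < y := eventually_mem_nhdsWithin
  have hcoe0 : Tendsto (fun y : ℝ => (y:ℂ)) (𝓝[>] (0:ℝ)) (𝓝 0) := by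
    have := Complex.continuous_ofReal.tendsto (0:ℝ)
    simpa using this.mono_left nhdsWithin_le_nhds
  have hyI0 : Tendsto (fun y : ℝ => (y:ℂ) * Complex.I) (𝓝[>] (0:ℝ)) (𝓝 0) := by
    simpa using hcoe0.mul_const Complex.I
  have hyIne : ∀ y : ℝ, 0 < y → (y:ℂ) * Complex.I ≠ 0 := fun y hy =>
    mul_ne_zero (Complex.ofReal_ne_zero.mpr hy.ne') Complex.I_ne_zero
  have habsyI : ∀ y : ℝ, 0 < y → ‖(y:ℂ) * Complex.I‖ = y := by
    intro y hy; simp [norm_mul, abs_of_pos hy]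
  have hZim : ∀ y : ℝ, ((ξ:ℂ) + (y:ℂ) * Complex.I).im = y := by intro y; simp
  have hWim : ∀ y : ℝ, ((ζ:ℂ) + (y:ℂ) * Complex.I).im = y := by intro y; simp
  have hZtend : Tendsto (fun y : ℝ => (ξ:ℂ) + (y:ℂ) * Complex.I) (𝓝[>] (0:ℝ)) (𝓝 (ξ:ℂ)) := by
    simpa using tendsto_const_nhds.add hyI0
  have hWtend : Tendsto (fun y : ℝ => (ζ:ℂ) + (y:ℂ) * Complex.I) (𝓝[>] (0:ℝ)) (𝓝 (ζ:ℂ)) := by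
    simpa using tendsto_const_nhds.add hyI0
  have hZsub : ∀ y : ℝ, (ξ:ℂ) + (y:ℂ) * Complex.I - (ξ:ℂ) = (y:ℂ) * Complex.I := by
    intro y; ring
  have hWsub : ∀ y : ℝ, (ζ:ℂ) + (y:ℂ) * Complex.I - (ζ:ℂ) = (y:ℂ) * Complex.I := by
    intro y; ring
  have hZbd : ∀ᶠ (y:ℝ) in 𝓝[>] (0:ℝ), 0 < ((ξ:ℂ) + (y:ℂ) * Complex.I).im ∧
      ‖(ξ:ℂ) + (y:ℂ) * Complex.I - (ξ:ℂ)‖ ≤ 2 * ((ξ:ℂ) + (y:ℂ) * Complex.I).im := by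
    filter_upwards [hy0] with y hy
    rw [hZim, hZsub, habsyI y hy]
    exact ⟨hy, by linarith⟩
  have hWbd : ∀ᶠ (y:ℝ) in 𝓝[>] (0:ℝ), 0 < ((ζ:ℂ) + (y:ℂ) * Complex.I).im ∧
      ‖(ζ:ℂ) + (y:ℂ) * Complex.I - (ζ:ℂ)‖ ≤ 2 * ((ζ:ℂ) + (y:ℂ) * Complex.I).im := by
    filter_upwards [hy0] with y hy
    rw [hWim, hWsub, habsyI y hy]
    exact ⟨hy, by linarith⟩
  -- the quotient functions
  set Q1 : ℝ → ℂ := fun y => (ω₁ ((ξ:ℂ) + (y:ℂ) * Complex.I) - ((ξ / t : ℝ) : ℂ)) /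
      ((y:ℂ) * Complex.I) with hQ1def
  set Q2 : ℝ → ℂ := fun y => (ω₂ ((ζ:ℂ) + (y:ℂ) * Complex.I) - ((ζ / t : ℝ) : ℂ)) /
      ((y:ℂ) * Complex.I) with hQ2def
  have hq1 : Tendsto Q1 (𝓝[>] (0:ℝ)) (𝓝 ((α : ℝ) : ℂ)) := hJC₁
  have hq2 : Tendsto Q2 (𝓝[>] (0:ℝ)) (𝓝 ((β : ℝ) : ℂ)) := hJC₂
  have hQ1mul : ∀ y : ℝ, 0 < y →
      Q1 y * ((y:ℂ) * Complex.I) = ω₁ ((ξ:ℂ) + (y:ℂ) * Complex.I) - ((ξ / t : ℝ) : ℂ) := by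
    intro y hy; rw [hQ1def]; exact div_mul_cancel₀ _ (hyIne y hy)
  have hQ2mul : ∀ y : ℝ, 0 < y →
      Q2 y * ((y:ℂ) * Complex.I) = ω₂ ((ζ:ℂ) + (y:ℂ) * Complex.I) - ((ζ / t : ℝ) : ℂ) := by
    intro y hy; rw [hQ2def]; exact div_mul_cancel₀ _ (hyIne y hy)
  have hZ1im : ∀ y : ℝ, 0 < y → (ω₁ ((ξ:ℂ) + (y:ℂ) * Complex.I)).im = (Q1 y).re * y := by
    intro y hy
    have h1 : ω₁ ((ξ:ℂ) + (y:ℂ) * Complex.I) =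
        ((ξ / t : ℝ) : ℂ) + Q1 y * ((y:ℂ) * Complex.I) := by
      rw [hQ1mul y hy]; ring
    rw [h1]
    simp [Complex.add_im, Complex.mul_im]
  have hZ2im : ∀ y : ℝ, 0 < y → (ω₂ ((ζ:ℂ) + (y:ℂ) * Complex.I)).im = (Q2 y).re * y := by
    intro y hy
    have h1 : ω₂ ((ζ:ℂ) + (y:ℂ) * Complex.I) =
        ((ζ / t : ℝ) : ℂ) + Q2 y * ((y:ℂ) * Complex.I) := by
      rw [hQ2mul y hy]; ring
    rw [h1]
    simp [Complex.add_im, Complex.mul_im]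
  have hZ1abs : ∀ y : ℝ, 0 < y →
      ‖ω₁ ((ξ:ℂ) + (y:ℂ) * Complex.I) - ((ξ / t : ℝ) : ℂ)‖ =
        ‖Q1 y‖ * y := by
    intro y hy
    rw [← hQ1mul y hy, norm_mul, habsyI y hy]
  have hZ2abs : ∀ y : ℝ, 0 < y →
      ‖ω₂ ((ζ:ℂ) + (y:ℂ) * Complex.I) - ((ζ / t : ℝ) : ℂ)‖ =
        ‖Q2 y‖ * y := by
    intro y hy
    rw [← hQ2mul y hy, norm_mul, habsyI y hy]
  -- eventual control on Q1, Q2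
  have habsq1 : Tendsto (fun (y:ℝ) => ‖Q1 y‖) (𝓝[>] (0:ℝ)) (𝓝 α) := by
    have := (continuous_norm.tendsto _).comp hq1
    simpa [abs_of_pos hα, Function.comp_def] using this
  have habsq2 : Tendsto (fun (y:ℝ) => ‖Q2 y‖) (𝓝[>] (0:ℝ)) (𝓝 β) := by
    have := (continuous_norm.tendsto _).comp hq2
    simpa [abs_of_pos hβ, Function.comp_def] using this
  have hreq1 : Tendsto (fun y => (Q1 y).re) (𝓝[>] (0:ℝ)) (𝓝 α) := by
    have := (Complex.continuous_re.tendsto _).comp hq1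
    simpa [Function.comp_def] using this
  have hreq2 : Tendsto (fun y => (Q2 y).re) (𝓝[>] (0:ℝ)) (𝓝 β) := by
    have := (Complex.continuous_re.tendsto _).comp hq2
    simpa [Function.comp_def] using this
  have hev1 : ∀ᶠ y in 𝓝[>] (0:ℝ), ‖Q1 y‖ ≤ 2 * (Q1 y).re ∧ 0 < (Q1 y).re := by
    filter_upwards [habsq1.eventually_lt_const (show α < (5/4)*α by linarith),
      hreq1.eventually_const_lt (show (5/8)*α < α by linarith)] with y h1 h2
    constructor <;> linarith
  have hev2 : ∀ᶠ y in 𝓝[>] (0:ℝ), ‖Q2 y‖ ≤ 2 * (Q2 y).re ∧ 0 < (Q2 y).re := by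
    filter_upwards [habsq2.eventually_lt_const (show β < (5/4)*β by linarith),
      hreq2.eventually_const_lt (show (5/8)*β < β by linarith)] with y h1 h2
    constructor <;> linarith
  -- limits of the subordination functions
  have hZ1tend : Tendsto (fun y : ℝ => ω₁ ((ξ:ℂ) + (y:ℂ) * Complex.I)) (𝓝[>] (0:ℝ))
      (𝓝 ((ξ / t : ℝ) : ℂ)) := by
    have h1 : Tendsto (fun y : ℝ => ((ξ / t : ℝ) : ℂ) + Q1 y * ((y:ℂ) * Complex.I))
        (𝓝[>] (0:ℝ)) (𝓝 ((ξ / t : ℝ) : ℂ)) := by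
      simpa using tendsto_const_nhds.add (hq1.mul hyI0)
    refine Tendsto.congr' ?_ h1
    filter_upwards [hy0] with y hy
    rw [hQ1mul y hy]; ring
  have hZ2tend : Tendsto (fun y : ℝ => ω₂ ((ζ:ℂ) + (y:ℂ) * Complex.I)) (𝓝[>] (0:ℝ))
      (𝓝 ((ζ / t : ℝ) : ℂ)) := by
    have h1 : Tendsto (fun y : ℝ => ((ζ / t : ℝ) : ℂ) + Q2 y * ((y:ℂ) * Complex.I))
        (𝓝[>] (0:ℝ)) (𝓝 ((ζ / t : ℝ) : ℂ)) := by
      simpa using tendsto_const_nhds.add (hq2.mul hyI0)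
    refine Tendsto.congr' ?_ h1
    filter_upwards [hy0] with y hy
    rw [hQ2mul y hy]; ring
  have hZ1bd : ∀ᶠ (y:ℝ) in 𝓝[>] (0:ℝ), 0 < (ω₁ ((ξ:ℂ) + (y:ℂ) * Complex.I)).im ∧
      ‖ω₁ ((ξ:ℂ) + (y:ℂ) * Complex.I) - ((ξ / t : ℝ) : ℂ)‖ ≤
        2 * (ω₁ ((ξ:ℂ) + (y:ℂ) * Complex.I)).im := by
    filter_upwards [hy0, hev1] with y hy h1
    refine ⟨hω₁ _ (by rw [hZim]; exact hy), ?_⟩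
    rw [hZ1abs y hy, hZ1im y hy]
    calc ‖Q1 y‖ * y ≤ (2 * (Q1 y).re) * y :=
      mul_le_mul_of_nonneg_right h1.1 hy.le
    _ = 2 * ((Q1 y).re * y) := by ring
  have hZ2bd : ∀ᶠ (y:ℝ) in 𝓝[>] (0:ℝ), 0 < (ω₂ ((ζ:ℂ) + (y:ℂ) * Complex.I)).im ∧
      ‖ω₂ ((ζ:ℂ) + (y:ℂ) * Complex.I) - ((ζ / t : ℝ) : ℂ)‖ ≤
        2 * (ω₂ ((ζ:ℂ) + (y:ℂ) * Complex.I)).im := by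
    filter_upwards [hy0, hev2] with y hy h1
    refine ⟨hω₂ _ (by rw [hWim]; exact hy), ?_⟩
    rw [hZ2abs y hy, hZ2im y hy]
    calc ‖Q2 y‖ * y ≤ (2 * (Q2 y).re) * y :=
      mul_le_mul_of_nonneg_right h1.1 hy.le
    _ = 2 * ((Q2 y).re * y) := by ring
  -- the four limits
  have hA := master2 ηt ξ ζ _ _ hZtend hWtend hZbd hWbd
  have hB := master2 η (ξ / t) (ζ / t) _ _ hZ1tend hZ2tend hZ1bd hZ2bd
  have hC1 := master1 (ηt.map Prod.fst) ξ _ hZtend hZbd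
  have hC2 := master1 (ηt.map Prod.snd) ζ _ hWtend hWbd
  rw [← hbdef] at hA
  rw [← hadef] at hB
  rw [← hm1def] at hC1
  rw [← hm2def] at hC2
  -- positivity of a via the bound
  have habsA : Tendsto (fun (y:ℝ) => ‖((ξ:ℂ) + (y:ℂ) * Complex.I - (ξ:ℂ)) * ((ζ:ℂ) + (y:ℂ) * Complex.I - (ζ:ℂ)) *
        cauchyTransform2 ηt ((ξ:ℂ) + (y:ℂ) * Complex.I) ((ζ:ℂ) + (y:ℂ) * Complex.I)‖)
      (𝓝[>] (0:ℝ)) (𝓝 b) := by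
    have h := (continuous_norm.tendsto _).comp hA
    have e : ‖((b:ℝ):ℂ)‖ = b := by
      rw [Complex.norm_real, Real.norm_eq_abs]; exact _root_.abs_of_pos hb
    rw [e] at h
    exact h
  have habsB : Tendsto (fun (y:ℝ) => ‖(ω₁ ((ξ:ℂ) + (y:ℂ) * Complex.I) - ((ξ / t : ℝ) : ℂ)) *
        (ω₂ ((ζ:ℂ) + (y:ℂ) * Complex.I) - ((ζ / t : ℝ) : ℂ)) *
        cauchyTransform2 η (ω₁ ((ξ:ℂ) + (y:ℂ) * Complex.I))
          (ω₂ ((ζ:ℂ) + (y:ℂ) * Complex.I))‖)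
      (𝓝[>] (0:ℝ)) (𝓝 a) := by
    have h := (continuous_norm.tendsto _).comp hB
    have ha0 : (0:ℝ) ≤ a := ENNReal.toReal_nonneg
    have e : ‖((a:ℝ):ℂ)‖ = a := by
      rw [Complex.norm_real, Real.norm_eq_abs]; exact _root_.abs_of_nonneg ha0
    rw [e] at h
    exact h
  have hineq_ev : ∀ᶠ (y:ℝ) in 𝓝[>] (0:ℝ),
      (‖Q1 y‖)^2 * (‖Q2 y‖)^2 * (‖((ξ:ℂ) + (y:ℂ) * Complex.I - (ξ:ℂ)) * ((ζ:ℂ) + (y:ℂ) * Complex.I - (ζ:ℂ)) *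
          cauchyTransform2 ηt ((ξ:ℂ) + (y:ℂ) * Complex.I) ((ζ:ℂ) + (y:ℂ) * Complex.I)‖)^2 /
        ((Q1 y).re * (Q2 y).re) ≤
      (‖(ω₁ ((ξ:ℂ) + (y:ℂ) * Complex.I) - ((ξ / t : ℝ) : ℂ)) *
        (ω₂ ((ζ:ℂ) + (y:ℂ) * Complex.I) - ((ζ / t : ℝ) : ℂ)) *
        cauchyTransform2 η (ω₁ ((ξ:ℂ) + (y:ℂ) * Complex.I))
          (ω₂ ((ζ:ℂ) + (y:ℂ) * Complex.I))‖)^2 := by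
    filter_upwards [hy0, hev1, hev2] with y hy h1 h2
    have hbd := hbound ((ξ:ℂ) + (y:ℂ) * Complex.I) ((ζ:ℂ) + (y:ℂ) * Complex.I)
      (by rw [hZim]; exact hy) (by rw [hWim]; exact hy)
    rw [hZim, hWim, hZ1im y hy, hZ2im y hy] at hbd
    have e1 : ‖((ξ:ℂ) + (y:ℂ) * Complex.I - (ξ:ℂ)) * ((ζ:ℂ) + (y:ℂ) * Complex.I - (ζ:ℂ)) *
          cauchyTransform2 ηt ((ξ:ℂ) + (y:ℂ) * Complex.I) ((ζ:ℂ) + (y:ℂ) * Complex.I)‖ =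
        y * y * ‖cauchyTransform2 ηt ((ξ:ℂ) + (y:ℂ) * Complex.I)
          ((ζ:ℂ) + (y:ℂ) * Complex.I)‖ := by
      rw [hZsub, hWsub, norm_mul, norm_mul, habsyI y hy]
    have e2 : ‖(ω₁ ((ξ:ℂ) + (y:ℂ) * Complex.I) - ((ξ / t : ℝ) : ℂ)) *
        (ω₂ ((ζ:ℂ) + (y:ℂ) * Complex.I) - ((ζ / t : ℝ) : ℂ)) *
        cauchyTransform2 η (ω₁ ((ξ:ℂ) + (y:ℂ) * Complex.I))
          (ω₂ ((ζ:ℂ) + (y:ℂ) * Complex.I))‖ =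
        (‖Q1 y‖ * y) * (‖Q2 y‖ * y) *
          ‖cauchyTransform2 η (ω₁ ((ξ:ℂ) + (y:ℂ) * Complex.I))
            (ω₂ ((ζ:ℂ) + (y:ℂ) * Complex.I))‖ := by
      rw [norm_mul, norm_mul, hZ1abs y hy, hZ2abs y hy]
    rw [e1, e2]
    set u := ‖cauchyTransform2 ηt ((ξ:ℂ) + (y:ℂ) * Complex.I)
      ((ζ:ℂ) + (y:ℂ) * Complex.I)‖ with hu
    set v := ‖cauchyTransform2 η (ω₁ ((ξ:ℂ) + (y:ℂ) * Complex.I))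
      (ω₂ ((ζ:ℂ) + (y:ℂ) * Complex.I))‖ with hv
    have hu0 : 0 ≤ u := norm_nonneg _
    have hv0 : 0 ≤ v := norm_nonneg _
    have ha1 : 0 ≤ ‖Q1 y‖ := norm_nonneg _
    have ha2 : 0 ≤ ‖Q2 y‖ := norm_nonneg _
    have hr : 0 < (Q1 y).re * (Q2 y).re := mul_pos h1.2 h2.2
    -- hbd : y * y * u^2 ≤ (Q1.re * y) * (Q2.re * y) * v^2
    have hyy : (0:ℝ) < y * y := by positivity
    have key : u^2 ≤ (Q1 y).re * (Q2 y).re * v^2 :=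
      le_of_mul_le_mul_right (by nlinarith [hbd]) hyy
    rw [div_le_iff₀ hr]
    nlinarith [mul_le_mul_of_nonneg_left key (by positivity :
        (0:ℝ) ≤ (‖Q1 y‖)^2 * (‖Q2 y‖)^2 * (y*y)^2)]
  have hlhs_tend : Tendsto (fun (y:ℝ) =>
      (‖Q1 y‖)^2 * (‖Q2 y‖)^2 * (‖((ξ:ℂ) + (y:ℂ) * Complex.I - (ξ:ℂ)) * ((ζ:ℂ) + (y:ℂ) * Complex.I - (ζ:ℂ)) *
          cauchyTransform2 ηt ((ξ:ℂ) + (y:ℂ) * Complex.I) ((ζ:ℂ) + (y:ℂ) * Complex.I)‖)^2 /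
        ((Q1 y).re * (Q2 y).re)) (𝓝[>] (0:ℝ)) (𝓝 (α^2 * β^2 * b^2 / (α * β))) :=
    (((habsq1.pow 2).mul (habsq2.pow 2)).mul (habsA.pow 2)).div (hreq1.mul hreq2)
      (ne_of_gt (mul_pos hα hβ))
  have ha2ge : α^2 * β^2 * b^2 / (α * β) ≤ a^2 :=
    le_of_tendsto_of_tendsto hlhs_tend (habsB.pow 2) hineq_ev
  have ha : 0 < a := by
    have h1 : α^2 * β^2 * b^2 / (α * β) = α * β * b^2 := by field_simp
    have h2 : 0 < α * β * b^2 := by positivity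
    have ha0 : (0:ℝ) ≤ a := ENNReal.toReal_nonneg
    nlinarith
  -- the identity of limits
  have hbC : ((b:ℝ):ℂ) ≠ 0 := Complex.ofReal_ne_zero.mpr hb.ne'
  have haC : ((a:ℝ):ℂ) ≠ 0 := Complex.ofReal_ne_zero.mpr ha.ne'
  have hm1C : ((m₁:ℝ):ℂ) ≠ 0 := Complex.ofReal_ne_zero.mpr hm1.ne'
  have hm2C : ((m₂:ℝ):ℂ) ≠ 0 := Complex.ofReal_ne_zero.mpr hm2.ne'
  have hE : ∀ᶠ (y:ℝ) in 𝓝[>] (0:ℝ),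
      (((ξ:ℂ) + (y:ℂ) * Complex.I - (ξ:ℂ)) * ((ζ:ℂ) + (y:ℂ) * Complex.I - (ζ:ℂ)) *
        cauchyTransform2 ηt ((ξ:ℂ) + (y:ℂ) * Complex.I) ((ζ:ℂ) + (y:ℂ) * Complex.I))⁻¹ =
      (t:ℂ) * Q1 y * Q2 y / ((ω₁ ((ξ:ℂ) + (y:ℂ) * Complex.I) - ((ξ / t : ℝ) : ℂ)) *
        (ω₂ ((ζ:ℂ) + (y:ℂ) * Complex.I) - ((ζ / t : ℝ) : ℂ)) *
        cauchyTransform2 η (ω₁ ((ξ:ℂ) + (y:ℂ) * Complex.I))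
          (ω₂ ((ζ:ℂ) + (y:ℂ) * Complex.I))) +
      (1 - (t:ℂ)) / ((((ξ:ℂ) + (y:ℂ) * Complex.I - (ξ:ℂ)) *
          cauchyTransform (ηt.map Prod.fst) ((ξ:ℂ) + (y:ℂ) * Complex.I)) *
        (((ζ:ℂ) + (y:ℂ) * Complex.I - (ζ:ℂ)) *
          cauchyTransform (ηt.map Prod.snd) ((ζ:ℂ) + (y:ℂ) * Complex.I))) := by
    filter_upwards [hy0, hsub] with y hy hs
    obtain ⟨hG0, hH0, hid, hmeq1, hmeq2⟩ := hs
    rw [hZsub, hWsub, ← hmeq1, ← hmeq2]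
    have hiy : ((y:ℂ) * Complex.I) ≠ 0 := hyIne y hy
    have hs1 : ω₁ ((ξ:ℂ) + (y:ℂ) * Complex.I) - ((ξ / t : ℝ) : ℂ) ≠ 0 :=
      sub_real_ne_zero (hω₁ _ (by rw [hZim]; exact hy)) _
    have hs2 : ω₂ ((ζ:ℂ) + (y:ℂ) * Complex.I) - ((ζ / t : ℝ) : ℂ) ≠ 0 :=
      sub_real_ne_zero (hω₂ _ (by rw [hWim]; exact hy)) _
    have hq1y : Q1 y = (ω₁ ((ξ:ℂ) + (y:ℂ) * Complex.I) - ((ξ / t : ℝ) : ℂ)) /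
        ((y:ℂ) * Complex.I) := rfl
    have hq2y : Q2 y = (ω₂ ((ζ:ℂ) + (y:ℂ) * Complex.I) - ((ζ / t : ℝ) : ℂ)) /
        ((y:ℂ) * Complex.I) := rfl
    rw [hq1y, hq2y]
    exact alg_identity _ _ _ _ _ _ _ _ hiy hs1 hs2 hG0 hH0 hid
  have hlhs : Tendsto (fun (y:ℝ) =>
      (((ξ:ℂ) + (y:ℂ) * Complex.I - (ξ:ℂ)) * ((ζ:ℂ) + (y:ℂ) * Complex.I - (ζ:ℂ)) *
        cauchyTransform2 ηt ((ξ:ℂ) + (y:ℂ) * Complex.I) ((ζ:ℂ) + (y:ℂ) * Complex.I))⁻¹)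
      (𝓝[>] (0:ℝ)) (𝓝 (((b:ℝ):ℂ))⁻¹) := hA.inv₀ hbC
  have hrhs : Tendsto (fun (y:ℝ) =>
      (t:ℂ) * Q1 y * Q2 y / ((ω₁ ((ξ:ℂ) + (y:ℂ) * Complex.I) - ((ξ / t : ℝ) : ℂ)) *
        (ω₂ ((ζ:ℂ) + (y:ℂ) * Complex.I) - ((ζ / t : ℝ) : ℂ)) *
        cauchyTransform2 η (ω₁ ((ξ:ℂ) + (y:ℂ) * Complex.I))
          (ω₂ ((ζ:ℂ) + (y:ℂ) * Complex.I))) +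
      (1 - (t:ℂ)) / ((((ξ:ℂ) + (y:ℂ) * Complex.I - (ξ:ℂ)) *
          cauchyTransform (ηt.map Prod.fst) ((ξ:ℂ) + (y:ℂ) * Complex.I)) *
        (((ζ:ℂ) + (y:ℂ) * Complex.I - (ζ:ℂ)) *
          cauchyTransform (ηt.map Prod.snd) ((ζ:ℂ) + (y:ℂ) * Complex.I))))
      (𝓝[>] (0:ℝ)) (𝓝 ((t:ℂ) * (α:ℂ) * (β:ℂ) / (a:ℂ) +
        (1 - (t:ℂ)) / ((m₁:ℂ) * (m₂:ℂ)))) := by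
    exact (((tendsto_const_nhds.mul hq1).mul hq2).div hB haC).add
      (tendsto_const_nhds.div (hC1.mul hC2) (mul_ne_zero hm1C hm2C))
  have huniq : (((b:ℝ):ℂ))⁻¹ = (t:ℂ) * (α:ℂ) * (β:ℂ) / (a:ℂ) +
      (1 - (t:ℂ)) / ((m₁:ℂ) * (m₂:ℂ)) :=
    tendsto_nhds_unique (hlhs.congr' hE) hrhs
  have hreal : b⁻¹ = t * α * β / a + (1 - t) / (m₁ * m₂) := by
    exact_mod_cast huniq
  constructor
  · rw [pos_iff_ne_zero]
    intro h0
    rw [hadef] at ha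
    rw [h0] at ha
    simp at ha
  · have hα' : p / m₁ = α := by rw [hαdef, hatomμ.1]
    have hβ' : q / m₂ = β := by rw [hβdef, hatomν.1]
    calc m₁ * m₂ / b = m₁ * m₂ * b⁻¹ := by rw [div_eq_mul_inv]
    _ = m₁ * m₂ * (t * α * β / a + (1 - t) / (m₁ * m₂)) := by rw [hreal]
    _ = t * p * q / a + 1 - t := by
        rw [← hα', ← hβ']
        field_simp
        ring
end
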